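/- arXiv:1907.05974 — 5 statements merged into one kernel-verified Lean document; each statement's English description precedes it below -/
import Mathlib

section
/- A set R = {v₁,...,vₙ} of k-mers resolves the Hamming graph H_{k,a} if and only if the only solution z ∈ ℝ^{ak} to Az = 0, subject to the constraint that each of the k consecutive length-a blocks of z is a difference of two canonical basis vectors of ℝ^a, is z = 0, where A is the n×(ak) matrix whose i-th row is vec(Vᵢ) with Vᵢ the one-hot encoding of vᵢ. -/
lemma sum_ind_aux {k a : ℕ} (u w : Fin k → Fin a) :
    ∑ j, (if w j = u j then (1:ℝ) else 0) = (k : ℝ) - hammingDist u w := by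
  rw [Finset.sum_boole]
  have h := Finset.card_filter_add_card_filter_not
    (s := (Finset.univ : Finset (Fin k))) (p := fun j => w j = u j)
  have hd : hammingDist u w =
      (Finset.univ.filter (fun j => ¬ (w j = u j))).card := by
    unfold hammingDist
    congr 1
    apply Finset.filter_congr
    intro j _
    simp [eq_comm, ne_eq]
  rw [hd]
  have : (Finset.univ.filter (fun j => w j = u j)).card +
      (Finset.univ.filter (fun j => ¬ (w j = u j))).card = k := by
    simpa using h
  push_cast
  have := congrArg (Nat.cast (R := ℝ)) this
  push_cast at this
  linarith

lemma mulvec_aux {a k n : ℕ}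
    (vs : Fin n → (Fin k → Fin a))
    (A : Matrix (Fin n) (Fin k × Fin a) ℝ)
    (hA : ∀ i p, A i p = if p.2 = vs i p.1 then 1 else 0)
    (z : Fin k × Fin a → ℝ) (i : Fin n) :
    A.mulVec z i = ∑ j, z (j, vs i j) := by
  unfold Matrix.mulVec dotProduct
  rw [Fintype.sum_prod_type]
  refine Finset.sum_congr rfl (fun j _ => ?_)
  rw [Finset.sum_eq_single (vs i j)]
  · simp [hA]
  · intro l _ hl; simp [hA, hl]
  · simp

theorem stmt_3 {a k n : ℕ} (ha : 2 ≤ a) (hk : 1 ≤ k) (hn : 1 ≤ n)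
    (vs : Fin n → (Fin k → Fin a))
    (A : Matrix (Fin n) (Fin k × Fin a) ℝ)
    (hA : ∀ i p, A i p = if p.2 = vs i p.1 then 1 else 0) :
    (∀ u v : Fin k → Fin a, u ≠ v → ∃ i, hammingDist u (vs i) ≠ hammingDist v (vs i)) ↔
    (∀ z : Fin k × Fin a → ℝ,
      A.mulVec z = 0 →
      (∀ j : Fin k, ∃ p q : Fin a, ∀ l : Fin a,
        z (j, l) = (if l = p then (1:ℝ) else 0) - (if l = q then 1 else 0)) →
      z = 0) := by
  constructor
  · intro hres z hz hblk
    choose u v hz' using hblk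
    have huv : u = v := by
      by_contra hne
      obtain ⟨i, hi⟩ := hres u v hne
      have h0 : A.mulVec z i = 0 := by rw [hz]; rfl
      rw [mulvec_aux vs A hA z i] at h0
      have hsum : ∑ j, z (j, vs i j) =
          (∑ j, (if vs i j = u j then (1:ℝ) else 0)) -
          (∑ j, (if vs i j = v j then (1:ℝ) else 0)) := by
        rw [← Finset.sum_sub_distrib]
        exact Finset.sum_congr rfl (fun j _ => hz' j (vs i j))
      rw [hsum, sum_ind_aux u (vs i), sum_ind_aux v (vs i)] at h0
      apply hi
      have : ((hammingDist u (vs i) : ℝ)) = (hammingDist v (vs i) : ℝ) := by linarith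
      exact_mod_cast this
    funext p
    obtain ⟨j, l⟩ := p
    rw [hz' j l, huv]
    simp
  · intro h u v huv
    by_contra hcon
    push_neg at hcon
    set z : Fin k × Fin a → ℝ := fun p =>
      (if p.2 = u p.1 then (1:ℝ) else 0) - (if p.2 = v p.1 then 1 else 0) with hzdef
    have hz0 : A.mulVec z = 0 := by
      funext i
      simp only [Pi.zero_apply]
      rw [mulvec_aux vs A hA z i]
      have hsum : ∑ j, z (j, vs i j) =
          (∑ j, (if vs i j = u j then (1:ℝ) else 0)) -
          (∑ j, (if vs i j = v j then (1:ℝ) else 0)) := by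
        rw [← Finset.sum_sub_distrib]
      rw [hsum, sum_ind_aux u (vs i), sum_ind_aux v (vs i), hcon i]
      ring
    have hblk : ∀ j : Fin k, ∃ p q : Fin a, ∀ l : Fin a,
        z (j, l) = (if l = p then (1:ℝ) else 0) - (if l = q then 1 else 0) :=
      fun j => ⟨u j, v j, fun l => rfl⟩
    have hz := h z hz0 hblk
    apply huv
    funext j
    have : z (j, u j) = 0 := by rw [hz]; rfl
    simp only [hzdef] at this
    by_contra hju
    simp [hju] at this
end

section
/- A set R = {v₁,...,vₙ} of binary k-mers resolves the hypercube H_{k,2} if and only if the kernel of the n×k matrix B, whose i-th row is vᵢ - v̄ᵢ (where v̄ᵢ flips 0s and 1s), intersects {0,±1}^k only in the zero vector. -/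
open Finset in
lemma hd_sum {k : ℕ} (u w : Fin k → Fin 2) :
    (hammingDist u w : ℝ) = ∑ j, (if u j = w j then (0:ℝ) else 1) := by
  rw [hammingDist, card_filter]
  push_cast
  congr 1
  ext j
  by_cases h : u j = w j <;> simp [h]

open Finset in
lemma key {k n : ℕ} (vs : Fin n → (Fin k → Fin 2))
    (B : Matrix (Fin n) (Fin k) ℝ)
    (hB : ∀ i j, B i j = (vs i j : ℝ) - (1 - (vs i j : ℝ)))
    (i : Fin n) (u v : Fin k → Fin 2) :
    ∑ j, B i j * ((v j : ℝ) - (u j : ℝ)) =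
      (hammingDist u (vs i) : ℝ) - (hammingDist v (vs i) : ℝ) := by
  rw [hd_sum, hd_sum, ← Finset.sum_sub_distrib]
  apply Finset.sum_congr rfl
  intro j _
  rw [hB]
  have hu : u j = 0 ∨ u j = 1 := by omega
  have hv : v j = 0 ∨ v j = 1 := by omega
  have hw : vs i j = 0 ∨ vs i j = 1 := by omega
  rcases hu with h1 | h1 <;> rcases hv with h2 | h2 <;> rcases hw with h3 | h3 <;>
    simp [h1, h2, h3] <;> ring

theorem stmt_5 {k n : ℕ} (hk : 1 ≤ k) (hn : 1 ≤ n)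
    (vs : Fin n → (Fin k → Fin 2))
    (B : Matrix (Fin n) (Fin k) ℝ)
    (hB : ∀ i j, B i j = (vs i j : ℝ) - (1 - (vs i j : ℝ))) :
    (∀ u v : Fin k → Fin 2, u ≠ v → ∃ i, hammingDist u (vs i) ≠ hammingDist v (vs i)) ↔
    (∀ z : Fin k → ℝ, B.mulVec z = 0 →
      (∀ j, z j = 0 ∨ z j = 1 ∨ z j = -1) → z = 0) := by
  constructor
  · intro h z hz hz01
    by_contra hzne
    have ⟨j0, hj0⟩ : ∃ j, z j ≠ 0 := by
      by_contra hc
      push_neg at hc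
      exact hzne (funext hc)
    set u : Fin k → Fin 2 := fun j => if z j = -1 then 1 else 0 with hu
    set v : Fin k → Fin 2 := fun j => if z j = 1 then 1 else 0 with hv
    have hrepr : ∀ j, (v j : ℝ) - (u j : ℝ) = z j := by
      intro j
      rcases hz01 j with h0 | h0 | h0 <;> simp [hu, hv, h0] <;> norm_num
    have huv : u ≠ v := by
      intro he
      apply hj0
      rcases hz01 j0 with h0 | h0 | h0
      · exact h0
      · have h2 := congrFun he j0
        simp [hu, hv, h0] at h2
        norm_num at h2
      · have h2 := congrFun he j0
        simp [hu, hv, h0] at h2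
        norm_num at h2
    obtain ⟨i, hi⟩ := h u v huv
    apply hi
    have h1 : (B.mulVec z) i = 0 := by rw [hz]; rfl
    have h2 : ∑ j, B i j * z j = 0 := h1
    have h3 : ∑ j, B i j * ((v j : ℝ) - (u j : ℝ)) = 0 := by
      rw [Finset.sum_congr rfl fun j _ => by rw [hrepr j]]; exact h2
    rw [key vs B hB i u v] at h3
    have := sub_eq_zero.mp h3
    exact_mod_cast this
  · intro h u v huv
    by_contra hc
    push_neg at hc
    set z : Fin k → ℝ := fun j => (v j : ℝ) - (u j : ℝ) with hzdef
    have hz01 : ∀ j, z j = 0 ∨ z j = 1 ∨ z j = -1 := by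
      intro j
      have hu : u j = 0 ∨ u j = 1 := by omega
      have hv : v j = 0 ∨ v j = 1 := by omega
      rcases hu with h1 | h1 <;> rcases hv with h2 | h2 <;> simp [hzdef, h1, h2]
    have hmul : B.mulVec z = 0 := by
      funext i
      show ∑ j, B i j * z j = 0
      rw [show ∑ j, B i j * z j = ∑ j, B i j * ((v j : ℝ) - (u j : ℝ)) from rfl,
        key vs B hB i u v, hc i]
      ring
    have hz0 := h z hmul hz01
    apply huv
    funext j
    have : z j = 0 := congrFun hz0 j
    have hu : u j = 0 ∨ u j = 1 := by omega
    have hv : v j = 0 ∨ v j = 1 := by omega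
    rcases hu with h1 | h1 <;> rcases hv with h2 | h2 <;>
      simp [hzdef, h1, h2] at this ⊢ <;> norm_num at this
end

section
/- Let R = {v₁,...,vₙ} be a set of binary k-mers containing the all-ones vector 1^k, and let C be the n×k real matrix whose rows are the vᵢ. Then R resolves H_{k,2} if and only if ker(C) ∩ {0,±1}^k = {0}. -/
lemma fin2_if (a b : Fin 2) :
    ((if a ≠ b then 1 else 0 : ℕ) : ℝ) = (a : ℝ) + b - 2 * a * b := by
  fin_cases a <;> fin_cases b <;> norm_num

lemma fin2_sub (a b : Fin 2) :
    ((a : ℝ) - b = 0) ∨ ((a : ℝ) - b = 1) ∨ ((a : ℝ) - b = -1) := by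
  fin_cases a <;> fin_cases b <;> norm_num

lemma hd_key {k : ℕ} (u v r : Fin k → Fin 2) :
    (hammingDist u r : ℝ) - hammingDist v r
      = ∑ j, ((u j : ℝ) - v j) * (1 - 2 * (r j : ℝ)) := by
  have hcast : ∀ x y : Fin k → Fin 2,
      (hammingDist x y : ℝ) = ∑ j, ((x j : ℝ) + y j - 2 * x j * y j) := by
    intro x y
    rw [hammingDist, Finset.card_filter, Nat.cast_sum]
    exact Finset.sum_congr rfl fun j _ => fin2_if _ _
  rw [hcast, hcast, ← Finset.sum_sub_distrib]
  exact Finset.sum_congr rfl fun j _ => by ring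

theorem stmt_6 {k n : ℕ} (hk : 1 ≤ k) (hn : 1 ≤ n)
    (vs : Fin n → (Fin k → Fin 2))
    (hone : ∃ i, vs i = fun _ => 1)
    (C : Matrix (Fin n) (Fin k) ℝ)
    (hC : ∀ i j, C i j = (vs i j : ℝ)) :
    (∀ u v : Fin k → Fin 2, u ≠ v → ∃ i, hammingDist u (vs i) ≠ hammingDist v (vs i)) ↔
    (∀ z : Fin k → ℝ, C.mulVec z = 0 →
      (∀ j, z j = 0 ∨ z j = 1 ∨ z j = -1) → z = 0) := by
  obtain ⟨i₀, hi₀⟩ := hone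
  have hCz : ∀ (z : Fin k → ℝ) (i), C.mulVec z i = ∑ j, (vs i j : ℝ) * z j := by
    intro z i
    simp [Matrix.mulVec, dotProduct, hC]
  constructor
  · intro hres z hz hzval
    by_contra hzne
    -- build u, v
    set u : Fin k → Fin 2 := fun j => if z j = 1 then 1 else 0 with hu
    set v : Fin k → Fin 2 := fun j => if z j = -1 then 1 else 0 with hv
    have huvz : ∀ j, (u j : ℝ) - v j = z j := by
      intro j
      rcases hzval j with h | h | h <;> simp [hu, hv, h] <;> norm_num
    have huv : u ≠ v := by
      obtain ⟨j, hj⟩ : ∃ j, z j ≠ 0 := by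
        by_contra hc; push_neg at hc
        exact hzne (funext fun j => hc j)
      intro h
      have hcf := congrFun h j
      rcases hzval j with h0 | h1 | h1
      · exact hj h0
      · rw [hu, hv] at hcf; norm_num [h1] at hcf
      · rw [hu, hv] at hcf; norm_num [h1] at hcf
    obtain ⟨i, hi⟩ := hres u v huv
    apply hi
    have hsum : ∑ j, z j = 0 := by
      have := congrFun hz i₀
      rw [hCz] at this
      simpa [hi₀] using this
    have hzi : ∑ j, (vs i j : ℝ) * z j = 0 := by
      have := congrFun hz i; rw [hCz] at this; simpa using this
    have := hd_key u v (vs i)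
    have hdz : (hammingDist u (vs i) : ℝ) - hammingDist v (vs i) = 0 := by
      rw [this]
      have : ∑ j, ((u j : ℝ) - v j) * (1 - 2 * (vs i j : ℝ))
          = ∑ j, z j - 2 * ∑ j, (vs i j : ℝ) * z j := by
        rw [Finset.mul_sum, ← Finset.sum_sub_distrib]
        exact Finset.sum_congr rfl fun j _ => by rw [huvz j]; ring
      rw [this, hsum, hzi]; ring
    have : (hammingDist u (vs i) : ℝ) = hammingDist v (vs i) := by linarith
    exact_mod_cast this
  · intro hker u v huv
    by_contra h
    push_neg at h
    set z : Fin k → ℝ := fun j => (u j : ℝ) - v j with hz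
    have hzval : ∀ j, z j = 0 ∨ z j = 1 ∨ z j = -1 := by
      intro j
      show ((u j : ℝ) - v j = 0) ∨ _ ∨ _
      exact fin2_sub (u j) (v j)
    have hdiff : ∀ i, ∑ j, z j * (1 - 2 * (vs i j : ℝ)) = 0 := by
      intro i
      have := hd_key u v (vs i)
      rw [h i, sub_self] at this
      exact this.symm
    have hsum : ∑ j, z j = 0 := by
      have := hdiff i₀
      rw [hi₀] at this
      have h2 : ∑ j, z j * (1 - 2 * ((1 : Fin 2) : ℝ)) = -∑ j, z j := by
        rw [← Finset.sum_neg_distrib]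
        exact Finset.sum_congr rfl fun j _ => by norm_num
      rw [h2] at this
      linarith
    have hmul : C.mulVec z = 0 := by
      funext i
      rw [hCz]
      have := hdiff i
      have h2 : ∑ j, z j * (1 - 2 * (vs i j : ℝ))
          = ∑ j, z j - 2 * ∑ j, (vs i j : ℝ) * z j := by
        rw [Finset.mul_sum, ← Finset.sum_sub_distrib]
        exact Finset.sum_congr rfl fun j _ => by ring
      rw [h2, hsum] at this
      simpa using by linarith
    have hz0 := hker z hmul hzval
    apply huv
    funext j
    have : (u j : ℝ) = v j := by
      have := congrFun hz0 j
      simp [hz] at this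
      linarith
    have : (u j : ℕ) = (v j : ℕ) := by exact_mod_cast this
    exact Fin.val_injective this
end

section
/- A vector z ∈ ℝ^{ka} satisfies the polynomial system P = 0 (where P consists of zᵢ³ - zᵢ = 0 for all i, the sum of each consecutive length-a block of z equals 0, and for each block the quantity (2 - Σzⱼ²)·(Σzⱼ²) = 0 with sums over that block) if and only if each of the k consecutive length-a blocks of z is the difference of two canonical basis vectors of ℝ^a. -/
theorem stmt_8 {a k : ℕ} (ha : 2 ≤ a) (hk : 1 ≤ k) (z : Fin k × Fin a → ℝ) :
    ((∀ p : Fin k × Fin a, z p ^ 3 - z p = 0) ∧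
     (∀ j : Fin k, ∑ l : Fin a, z (j, l) = 0) ∧
     (∀ j : Fin k,
       (2 - ∑ l : Fin a, z (j, l) ^ 2) * (∑ l : Fin a, z (j, l) ^ 2) = 0)) ↔
    (∀ j : Fin k, ∃ p q : Fin a, ∀ l : Fin a,
      z (j, l) = (if l = p then (1:ℝ) else 0) - (if l = q then 1 else 0)) := by
  constructor
  · rintro ⟨hcube, hsum, hsq⟩ j
    have htri : ∀ l : Fin a, z (j, l) = -1 ∨ z (j, l) = 0 ∨ z (j, l) = 1 := by
      intro l
      have h := hcube (j, l)
      have : z (j, l) * (z (j, l) - 1) * (z (j, l) + 1) = 0 := by linear_combination h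
      rcases mul_eq_zero.1 this with h' | h'
      · rcases mul_eq_zero.1 h' with h'' | h''
        · right; left; exact h''
        · right; right; linarith
      · left; linarith
    have hS := hsq j
    rcases mul_eq_zero.1 hS with hS0 | hS0
    · -- sum of squares = 2
      have hS2 : ∑ l : Fin a, z (j, l) ^ 2 = 2 := by linarith
      set T : Finset (Fin a) := Finset.univ.filter (fun l => z (j, l) ≠ 0) with hT
      have hterm : ∀ l : Fin a, z (j, l) ^ 2 = if z (j, l) ≠ 0 then (1:ℝ) else 0 := by
        intro l
        rcases htri l with h | h | h <;> simp [h]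
      have hcard : (T.card : ℝ) = 2 := by
        rw [← hS2]
        rw [Finset.card_filter]
        push_cast
        rw [Finset.sum_congr rfl (fun l _ => hterm l)]
      have hcard2 : T.card = 2 := by exact_mod_cast hcard
      obtain ⟨p, q, hpq, hTpq⟩ := Finset.card_eq_two.1 hcard2
      have hp : z (j, p) ≠ 0 := by
        have : p ∈ T := by rw [hTpq]; simp
        simpa [hT] using this
      have hq : z (j, q) ≠ 0 := by
        have : q ∈ T := by rw [hTpq]; simp
        simpa [hT] using this
      have hzero : ∀ l : Fin a, l ≠ p → l ≠ q → z (j, l) = 0 := by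
        intro l hlp hlq
        by_contra h
        have : l ∈ T := by simp [hT, h]
        rw [hTpq] at this
        simp at this
        tauto
      have hsumT : z (j, p) + z (j, q) = 0 := by
        have := hsum j
        rw [← Finset.sum_filter_add_sum_filter_not Finset.univ (fun l => l = p ∨ l = q)] at this
        have h1 : (Finset.univ.filter (fun l => l = p ∨ l = q)) = {p, q} := by
          ext l; simp [or_comm]
        have h2 : ∑ l ∈ Finset.univ.filter (fun l => ¬(l = p ∨ l = q)), z (j, l) = 0 := by
          apply Finset.sum_eq_zero
          intro l hl
          simp at hl
          exact hzero l hl.1 hl.2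
        rw [h1, h2, Finset.sum_pair hpq] at this
        linarith
      rcases htri p with h | h | h
      · -- z p = -1, so z q = 1
        refine ⟨q, p, ?_⟩
        intro l
        by_cases h1 : l = q
        · subst h1; rw [if_pos rfl, if_neg (Ne.symm hpq)]; linarith
        · by_cases h2 : l = p
          · subst h2; rw [if_neg hpq, if_pos rfl]; linarith
          · rw [if_neg h1, if_neg h2, hzero l h2 h1]; ring
      · exact absurd h hp
      · refine ⟨p, q, ?_⟩
        intro l
        by_cases h1 : l = p
        · subst h1; rw [if_pos rfl, if_neg hpq]; linarith
        · by_cases h2 : l = q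
          · subst h2; rw [if_neg (Ne.symm hpq), if_pos rfl]; linarith
          · rw [if_neg h1, if_neg h2, hzero l h1 h2]; ring
    · -- sum of squares = 0 : all zero
      have hall : ∀ l : Fin a, z (j, l) = 0 := by
        intro l
        have := (Finset.sum_eq_zero_iff_of_nonneg (fun l _ => sq_nonneg (z (j, l)))).1 hS0 l
          (Finset.mem_univ l)
        exact pow_eq_zero_iff (by norm_num) |>.1 this
      exact ⟨⟨0, by omega⟩, ⟨0, by omega⟩, fun l => by simp [hall l]⟩
  · intro h
    refine ⟨?_, ?_, ?_⟩
    · rintro ⟨j, l⟩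
      obtain ⟨p, q, hpq⟩ := h j
      rw [hpq l]
      split_ifs <;> norm_num
    · intro j
      obtain ⟨p, q, hpq⟩ := h j
      simp only [hpq]
      rw [Finset.sum_sub_distrib]
      simp
    · intro j
      obtain ⟨p, q, hpq⟩ := h j
      simp only [hpq]
      by_cases hpqe : p = q
      · subst hpqe; simp
      · have : ∀ l : Fin a, ((if l = p then (1:ℝ) else 0) - (if l = q then 1 else 0)) ^ 2
            = (if l = p then (1:ℝ) else 0) + (if l = q then 1 else 0) := by
          intro l
          by_cases h1 : l = p <;> by_cases h2 : l = q <;>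
            first
            | (exfalso; exact hpqe (h1 ▸ h2 ▸ rfl))
            | simp [h1, h2, hpqe, Ne.symm hpqe]
        rw [Finset.sum_congr rfl (fun l _ => this l), Finset.sum_add_distrib]
        simp
        norm_num
end

section
/- A set R of k-mers resolves H_{k,a} if and only if ker(A) ∩ {P = 0} = {0}, where A is the matrix whose rows are the column-major vectorizations of the one-hot encodings of the elements of R, and {P = 0} is the set of z ∈ ℝ^{ak} each of whose k length-a blocks is the difference of two canonical vectors of ℝ^a. -/
lemma aux_sum_eq {a k : ℕ} (w p : Fin k → Fin a) :
    ∑ j : Fin k, (if w j = p j then (1:ℝ) else 0) = k - hammingDist p w := by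
  have h1 : ∀ j : Fin k, (if w j = p j then (1:ℝ) else 0)
      = 1 - (if p j ≠ w j then 1 else 0) := by
    intro j
    by_cases h : w j = p j
    · simp [h]
    · simp [h, Ne.symm h]
  simp only [h1]
  rw [Finset.sum_sub_distrib]
  have h2 : (hammingDist p w : ℝ) = ∑ j : Fin k, (if p j ≠ w j then (1:ℝ) else 0) := by
    rw [hammingDist, Finset.card_filter]
    push_cast
    simp
  rw [← h2]
  simp

theorem stmt_9 {a k n : ℕ} (ha : 2 ≤ a) (hk : 1 ≤ k) (hn : 1 ≤ n)
    (vs : Fin n → (Fin k → Fin a))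
    (A : Matrix (Fin n) (Fin k × Fin a) ℝ)
    (hA : ∀ i p, A i p = if p.2 = vs i p.1 then 1 else 0) :
    (∀ u v : Fin k → Fin a, u ≠ v → ∃ i, hammingDist u (vs i) ≠ hammingDist v (vs i)) ↔
    {z : Fin k × Fin a → ℝ | A.mulVec z = 0} ∩
      {z : Fin k × Fin a → ℝ |
        ∀ j : Fin k, ∃ p q : Fin a, ∀ l : Fin a,
          z (j, l) = (if l = p then (1:ℝ) else 0) - (if l = q then 1 else 0)} = {0} := by
  have hmv : ∀ (z : Fin k × Fin a → ℝ) (i : Fin n),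
      A.mulVec z i = ∑ j : Fin k, z (j, vs i j) := by
    intro z i
    simp only [Matrix.mulVec, dotProduct, hA]
    rw [Fintype.sum_prod_type]
    refine Finset.sum_congr rfl fun j _ => ?_
    simp [ite_mul]
  have key : ∀ (p q : Fin k → Fin a) (i : Fin n),
      ∑ j : Fin k, ((if vs i j = p j then (1:ℝ) else 0) - (if vs i j = q j then 1 else 0))
        = (hammingDist q (vs i) : ℝ) - hammingDist p (vs i) := by
    intro p q i
    rw [Finset.sum_sub_distrib, aux_sum_eq, aux_sum_eq]
    ring
  constructor
  · intro hres
    apply Set.eq_of_subset_of_subset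
    · rintro z ⟨hz1, hz2⟩
      choose p q hpq using hz2
      have hzval : ∀ j l, z (j, l) = (if l = p j then (1:ℝ) else 0) - (if l = q j then 1 else 0) :=
        fun j l => hpq j l
      have hpq_eq : p = q := by
        by_contra hne
        obtain ⟨i, hi⟩ := hres p q hne
        apply hi
        have h0 := congrFun hz1 i
        rw [hmv] at h0
        simp only [hzval] at h0
        rw [key p q i] at h0
        simp only [Pi.zero_apply] at h0
        have : (hammingDist q (vs i) : ℝ) = hammingDist p (vs i) := by linarith
        exact_mod_cast (Nat.cast_injective this).symm
      funext x
      obtain ⟨j, l⟩ := x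
      rw [hzval j l, hpq_eq]
      simp
    · rintro z hz
      rw [Set.mem_singleton_iff] at hz
      subst hz
      refine ⟨Matrix.mulVec_zero A, fun j => ⟨⟨0, by omega⟩, ⟨0, by omega⟩, fun l => by simp⟩⟩
  · intro hker u v huv
    by_contra h
    push_neg at h
    set z : Fin k × Fin a → ℝ :=
      fun x => (if x.2 = u x.1 then (1:ℝ) else 0) - (if x.2 = v x.1 then 1 else 0) with hzdef
    have hz : z ∈ ({z : Fin k × Fin a → ℝ | A.mulVec z = 0} ∩
      {z : Fin k × Fin a → ℝ |
        ∀ j : Fin k, ∃ p q : Fin a, ∀ l : Fin a,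
          z (j, l) = (if l = p then (1:ℝ) else 0) - (if l = q then 1 else 0)}) := by
      constructor
      · funext i
        rw [hmv]
        simp only [hzdef]
        rw [key u v i, h i]
        simp
      · exact fun j => ⟨u j, v j, fun l => rfl⟩
    rw [hker, Set.mem_singleton_iff] at hz
    obtain ⟨j, hj⟩ := Function.ne_iff.mp huv
    have h1 := congrFun hz (j, u j)
    simp [hzdef, hj] at h1
end
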